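/- Let A₁,…,A_m be subspaces of a finite-dimensional vector space U over a field, and for 1 ≤ k ≤ m let S_k = S_k(A₁,…,A_m) be the span of all k-fold intersections of the A_i. Then DisCoord(A₁,…,A_m) = Σ_{i=1}^m dim(A_i) − Σ_{k=1}^m dim(S_k). -/

import Mathlib

/-- The discoordination of `X` with respect to the family `A`:
`Σ_i (dim A_i − |X ∩ A_i|)`. -/
noncomputable def disCoordX (𝔽 : Type*) [Field 𝔽] {U : Type*} [AddCommGroup U]
    [Module 𝔽 U] {m : ℕ} (X : Set U) (A : Fin m → Submodule 𝔽 U) : ℕ :=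
  ∑ i, (Module.finrank 𝔽 ↥(A i) - (X ∩ (A i : Set U)).ncard)

/-- The discoordination of the family `A₁, …, A_m`: the minimum of
`disCoordX` over all linearly independent subsets `X` of the ambient space. -/
noncomputable def DisCoord (𝔽 : Type*) [Field 𝔽] {U : Type*} [AddCommGroup U]
    [Module 𝔽 U] {m : ℕ} (A : Fin m → Submodule 𝔽 U) : ℕ :=
  sInf { n : ℕ | ∃ X : Set U, LinearIndependent 𝔽 (fun x : X => (x : U)) ∧
    n = disCoordX 𝔽 X A }

/-- `S_k(A₁,…,A_m)`: the span of all `k`-fold intersections of the `A_i`. -/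
noncomputable def interSpan (𝔽 : Type*) [Field 𝔽] {U : Type*} [AddCommGroup U]
    [Module 𝔽 U] {m : ℕ} (A : Fin m → Submodule 𝔽 U) (k : ℕ) : Submodule 𝔽 U :=
  ⨆ (s : Finset (Fin m)) (_ : s.card = k), ⨅ i ∈ s, A i

section DisCoordAux

open Submodule Set Module
open scoped Classical

variable {𝔽 U : Type*} [Field 𝔽] [AddCommGroup U] [Module 𝔽 U] {m : ℕ}

/-- The union of all `k`-fold intersections of the `A_i`, as a set. -/
def interUnion (𝔽 : Type*) [Field 𝔽] {U : Type*} [AddCommGroup U] [Module 𝔽 U] {m : ℕ}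
    (A : Fin m → Submodule 𝔽 U) (k : ℕ) : Set U :=
  ⋃ (s : Finset (Fin m)) (_ : s.card = k), ((⨅ i ∈ s, A i : Submodule 𝔽 U) : Set U)

lemma mem_interUnion {A : Fin m → Submodule 𝔽 U} {k : ℕ} {x : U} :
    x ∈ interUnion 𝔽 A k ↔ ∃ s : Finset (Fin m), s.card = k ∧ ∀ i ∈ s, x ∈ A i := by
  simp [interUnion, Submodule.mem_iInf]

lemma span_interUnion (A : Fin m → Submodule 𝔽 U) (k : ℕ) :
    Submodule.span 𝔽 (interUnion 𝔽 A k) = interSpan 𝔽 A k := by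
  rw [interUnion, interSpan, Submodule.span_iUnion₂]
  exact iSup_congr fun s => iSup_congr fun _ => Submodule.span_eq _

lemma interUnion_anti {A : Fin m → Submodule 𝔽 U} {k j : ℕ} (h : k ≤ j) :
    interUnion 𝔽 A j ⊆ interUnion 𝔽 A k := by
  intro x hx
  rw [mem_interUnion] at *
  obtain ⟨s, hs, hmem⟩ := hx
  obtain ⟨t, hts, htcard⟩ := Finset.exists_subset_card_eq (s := s) (n := k) (by omega)
  exact ⟨t, htcard, fun i hi => hmem i (hts hi)⟩

/-- The number of subspaces `A i` containing `x`. -/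
noncomputable def cdeg (A : Fin m → Submodule 𝔽 U) (x : U) : ℕ :=
  (Finset.univ.filter fun i => x ∈ A i).card

lemma cdeg_le (A : Fin m → Submodule 𝔽 U) (x : U) : cdeg A x ≤ m :=
  (Finset.card_filter_le _ _).trans_eq (by simp)

lemma mem_interUnion_iff_le_cdeg {A : Fin m → Submodule 𝔽 U} {k : ℕ} {x : U} :
    x ∈ interUnion 𝔽 A k ↔ k ≤ cdeg A x := by
  rw [mem_interUnion]
  constructor
  · rintro ⟨s, hs, hmem⟩
    calc k = s.card := hs.symm
    _ ≤ _ := Finset.card_le_card (fun i hi => by simp [hmem i hi])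
  · intro hk
    obtain ⟨t, hts, htcard⟩ :=
      Finset.exists_subset_card_eq (s := Finset.univ.filter fun i => x ∈ A i) (n := k) hk
    exact ⟨t, htcard, fun i hi => (Finset.mem_filter.1 (hts hi)).2⟩

lemma sum_cdeg (A : Fin m → Submodule 𝔽 U) (Xf : Finset U) :
    ∑ x ∈ Xf, cdeg A x = ∑ k ∈ Finset.Icc 1 m, (Xf.filter fun x => k ≤ cdeg A x).card := by
  have h1 : ∀ x ∈ Xf, cdeg A x = ∑ k ∈ Finset.Icc 1 m, if k ≤ cdeg A x then 1 else 0 := by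
    intro x _
    rw [← Finset.card_filter]
    have : (Finset.Icc 1 m).filter (fun k => k ≤ cdeg A x) = Finset.Icc 1 (cdeg A x) := by
      ext k
      simp only [Finset.mem_filter, Finset.mem_Icc]
      have := cdeg_le A x
      omega
    rw [this, Nat.card_Icc]
    omega
  rw [Finset.sum_congr rfl h1, Finset.sum_comm]
  exact Finset.sum_congr rfl fun k _ => (Finset.card_filter _ _).symm

lemma val_eq (A : Fin m → Submodule 𝔽 U) {X : Set U} (hfin : X.Finite) :
    ∑ i, (X ∩ (A i : Set U)).ncard = ∑ x ∈ hfin.toFinset, cdeg A x := by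
  have h1 : ∀ i, (X ∩ (A i : Set U)).ncard = (hfin.toFinset.filter fun x => x ∈ A i).card := by
    intro i
    have : X ∩ (A i : Set U) = ↑(hfin.toFinset.filter fun x => x ∈ A i) := by
      ext x; simp [Set.Finite.mem_toFinset, SetLike.mem_coe]
    rw [this, Set.ncard_coe_finset]
  simp only [h1, Finset.card_filter]
  rw [Finset.sum_comm]
  exact Finset.sum_congr rfl fun x _ => (Finset.card_filter _ _).symm

lemma ncard_le_finrank {Y : Set U} (hli : LinearIndependent 𝔽 (fun x : Y => (x : U)))
    (hfin : Y.Finite) {W : Submodule 𝔽 U} [Module.Finite 𝔽 W] (hYW : Y ⊆ W) :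
    Y.ncard ≤ Module.finrank 𝔽 W := by
  haveI : Fintype Y := hfin.fintype
  rw [Set.ncard_eq_toFinset_card', ← finrank_span_set_eq_card hli]
  exact Submodule.finrank_mono (Submodule.span_le.2 hYW)

variable [FiniteDimensional 𝔽 U]

/-- Upper bound: for linearly independent `X`,
`Σ_i |X ∩ A_i| ≤ Σ_k dim S_k`. -/
lemma val_le (A : Fin m → Submodule 𝔽 U) {X : Set U}
    (hli : LinearIndependent 𝔽 (fun x : X => (x : U))) :
    ∑ i, (X ∩ (A i : Set U)).ncard ≤
      ∑ k ∈ Finset.Icc 1 m, Module.finrank 𝔽 ↥(interSpan 𝔽 A k) := by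
  have hfin : X.Finite := hli.setFinite
  rw [val_eq A hfin, sum_cdeg]
  refine Finset.sum_le_sum fun k _ => ?_
  set Y : Set U := ↑(hfin.toFinset.filter fun x => k ≤ cdeg A x) with hY
  have hYX : Y ⊆ X := by
    intro x hx
    simp only [hY, Finset.coe_filter, Set.mem_setOf_eq, Set.Finite.mem_toFinset] at hx
    exact hx.1
  have hYcard : (hfin.toFinset.filter fun x => k ≤ cdeg A x).card = Y.ncard :=
    (Set.ncard_coe_finset _).symm
  rw [hYcard]
  refine ncard_le_finrank (LinearIndepOn.mono (R := 𝔽) (v := id) hli hYX) (hfin.subset hYX) ?_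
  intro x hx
  simp only [hY, Finset.coe_filter, Set.mem_setOf_eq, Set.Finite.mem_toFinset] at hx
  rw [← span_interUnion]
  exact Submodule.subset_span (mem_interUnion_iff_le_cdeg.2 hx.2)

lemma exists_chain (A : Fin m → Submodule 𝔽 U) :
    ∀ d : ℕ, d ≤ m → ∃ B : ℕ → Set U,
      (∀ k, m - d ≤ k → k ≤ m →
        B k ⊆ interUnion 𝔽 A k ∧ Submodule.span 𝔽 (B k) = interSpan 𝔽 A k ∧
        LinearIndependent 𝔽 (fun x : B k => (x : U))) ∧
      (∀ k j, m - d ≤ k → k ≤ j → j ≤ m → B j ⊆ B k) := by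
  intro d
  induction d with
  | zero =>
    intro _
    obtain ⟨b, hb1, hb2, hb3⟩ := exists_linearIndependent 𝔽 (interUnion 𝔽 A m)
    refine ⟨fun _ => b, fun k hk1 hk2 => ?_, fun k j _ _ _ => subset_rfl⟩
    have hkm : k = m := by omega
    subst hkm
    exact ⟨hb1, by rw [hb2, span_interUnion], hb3⟩
  | succ d ih =>
    intro hd
    obtain ⟨B, hB, hmono⟩ := ih (by omega)
    set k1 := m - (d + 1) with hk1def
    have hk0 : m - d = k1 + 1 := by omega
    have hsub : B (k1 + 1) ⊆ interUnion 𝔽 A k1 :=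
      ((hB (k1 + 1) (by omega) (by omega)).1).trans (interUnion_anti (by omega))
    obtain ⟨b, hb_sub, hBb, hspan, hli⟩ :=
      exists_linearIndepOn_id_extension (K := 𝔽) (hB (k1 + 1) (by omega) (by omega)).2.2 hsub
    refine ⟨fun j => if j ≤ k1 then b else B j, ?_, ?_⟩
    · intro k hk1 hk2
      by_cases h : k ≤ k1
      · have hkk : k = k1 := by omega
        subst hkk
        simp only
        rw [if_pos h]
        refine ⟨hb_sub, le_antisymm ?_ ?_, hli⟩
        · rw [← span_interUnion]; exact Submodule.span_mono hb_sub
        · rw [← span_interUnion]; exact Submodule.span_le.2 hspan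
      · simp only
        rw [if_neg h]
        exact hB k (by omega) hk2
    · intro k j hk hkj hjm
      by_cases hj : j ≤ k1
      · simp only [if_pos hj, if_pos (le_trans hkj hj)]
        exact subset_rfl
      · simp only [if_neg hj]
        by_cases hk' : k ≤ k1
        · simp only [if_pos hk']
          exact (hmono (k1 + 1) j (by omega) (by omega) hjm).trans hBb
        · simp only [if_neg hk']
          exact hmono k j (by omega) hkj hjm

/-- Lower bound: there exists a linearly independent `X` with
`Σ_k dim S_k ≤ Σ_i |X ∩ A_i|`. -/
lemma exists_good (A : Fin m → Submodule 𝔽 U) :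
    ∃ X : Set U, LinearIndependent 𝔽 (fun x : X => (x : U)) ∧
      ∑ k ∈ Finset.Icc 1 m, Module.finrank 𝔽 ↥(interSpan 𝔽 A k) ≤
        ∑ i, (X ∩ (A i : Set U)).ncard := by
  rcases Nat.eq_zero_or_pos m with hm | hm
  · subst hm
    exact ⟨∅, linearIndependent_empty 𝔽 U, by simp⟩
  obtain ⟨B, hB, hmono⟩ := exists_chain A (m - 1) (by omega)
  have h1 : m - (m - 1) = 1 := by omega
  rw [h1] at hB hmono
  set X := B 1 with hX
  have hli : LinearIndependent 𝔽 (fun x : X => (x : U)) := (hB 1 le_rfl hm).2.2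
  have hfin : X.Finite := hli.setFinite
  refine ⟨X, hli, ?_⟩
  rw [val_eq A hfin, sum_cdeg]
  refine Finset.sum_le_sum fun k hk => ?_
  rw [Finset.mem_Icc] at hk
  have hBk := hB k hk.1 hk.2
  have hfinBk : (B k).Finite := hBk.2.2.setFinite
  haveI : Fintype (B k) := hfinBk.fintype
  have hcard : Module.finrank 𝔽 ↥(interSpan 𝔽 A k) = (B k).toFinset.card := by
    rw [← hBk.2.1, finrank_span_set_eq_card hBk.2.2]
  rw [hcard]
  refine Finset.card_le_card ?_
  intro x hx
  rw [Set.mem_toFinset] at hx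
  rw [Finset.mem_filter, Set.Finite.mem_toFinset]
  exact ⟨hmono 1 k le_rfl hk.1 hk.2 hx, mem_interUnion_iff_le_cdeg.1 (hBk.1 hx)⟩

lemma disCoordX_cast (A : Fin m → Submodule 𝔽 U) {X : Set U}
    (hli : LinearIndependent 𝔽 (fun x : X => (x : U))) :
    (disCoordX 𝔽 X A : ℤ) =
      ∑ i, (Module.finrank 𝔽 ↥(A i) : ℤ) - ∑ i, ((X ∩ (A i : Set U)).ncard : ℤ) := by
  have hfin : X.Finite := hli.setFinite
  have hle : ∀ i, (X ∩ (A i : Set U)).ncard ≤ Module.finrank 𝔽 ↥(A i) := fun i =>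
    ncard_le_finrank (LinearIndepOn.mono (R := 𝔽) (v := id) hli Set.inter_subset_left) (hfin.subset Set.inter_subset_left)
      Set.inter_subset_right
  rw [disCoordX, Nat.cast_sum, ← Finset.sum_sub_distrib]
  exact Finset.sum_congr rfl fun i _ => by
    rw [Nat.cast_sub (hle i)]

end DisCoordAux

/-- The discoordination formula:
`DisCoord(A₁,…,A_m) = Σ_{i=1}^m dim A_i − Σ_{k=1}^m dim S_k`. -/
theorem disCoord_formula {𝔽 U : Type*} [Field 𝔽] [AddCommGroup U] [Module 𝔽 U]
    [FiniteDimensional 𝔽 U] {m : ℕ} (A : Fin m → Submodule 𝔽 U) :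
    (DisCoord 𝔽 A : ℤ) =
      (∑ i, (Module.finrank 𝔽 ↥(A i) : ℤ)) -
        ∑ k ∈ Finset.Icc 1 m, (Module.finrank 𝔽 ↥(interSpan 𝔽 A k) : ℤ) := by
  classical
  obtain ⟨X, hXli, hXgood⟩ := exists_good A
  have hS : {n : ℕ | ∃ X : Set U, LinearIndependent 𝔽 (fun x : X => (x : U)) ∧
      n = disCoordX 𝔽 X A}.Nonempty := ⟨disCoordX 𝔽 X A, X, hXli, rfl⟩
  have hsum_cast : ∑ k ∈ Finset.Icc 1 m, (Module.finrank 𝔽 ↥(interSpan 𝔽 A k) : ℤ) =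
      ((∑ k ∈ Finset.Icc 1 m, Module.finrank 𝔽 ↥(interSpan 𝔽 A k) : ℕ) : ℤ) := by
    push_cast; ring
  apply le_antisymm
  · -- DisCoord ≤ disCoordX X ≤ RHS
    have h1 : DisCoord 𝔽 A ≤ disCoordX 𝔽 X A := Nat.sInf_le ⟨X, hXli, rfl⟩
    have h2 : (disCoordX 𝔽 X A : ℤ) ≤
        (∑ i, (Module.finrank 𝔽 ↥(A i) : ℤ)) -
          ∑ k ∈ Finset.Icc 1 m, (Module.finrank 𝔽 ↥(interSpan 𝔽 A k) : ℤ) := by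
      rw [disCoordX_cast A hXli, hsum_cast]
      have : ((∑ k ∈ Finset.Icc 1 m, Module.finrank 𝔽 ↥(interSpan 𝔽 A k) : ℕ) : ℤ) ≤
          ∑ i, ((X ∩ (A i : Set U)).ncard : ℤ) := by
        rw [← Nat.cast_sum]
        exact_mod_cast hXgood
      omega
    exact le_trans (by exact_mod_cast h1) h2
  · -- RHS ≤ DisCoord: any value in the set is ≥ RHS
    obtain ⟨X0, hX0li, hX0⟩ := Nat.sInf_mem hS
    rw [show (DisCoord 𝔽 A : ℤ) = (disCoordX 𝔽 X0 A : ℤ) from by rw [DisCoord, ← hX0],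
      disCoordX_cast A hX0li, hsum_cast]
    have : ∑ i, ((X0 ∩ (A i : Set U)).ncard : ℤ) ≤
        ((∑ k ∈ Finset.Icc 1 m, Module.finrank 𝔽 ↥(interSpan 𝔽 A k) : ℕ) : ℤ) := by
      rw [← Nat.cast_sum]
      exact_mod_cast val_le A hX0li
    omega
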